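/- Let Γ = (V, E) be a locally finite graph and put k = κ_1(Γ). Let X ⊆ V be a finite subset such that |X| ≥ k and |X| + k ≤ |V|. Then there are a k-element subset C ⊆ X and an injection f : C → ∂(X) such that for every c ∈ C, (c, f(c)) is an arc of Γ. -/

import Mathlib

/-- The image of a set of vertices under the graph `E ⊆ V × V`:
`Γ(A) = ⋃_{x ∈ A} {y : (x, y) ∈ E}`. -/
def gImage {V : Type*} (E : Set (V × V)) (A : Set V) : Set V :=
  {y | ∃ x ∈ A, (x, y) ∈ E}

/-- The boundary `∂(X) = Γ(X) \ X`. -/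
def gBdry {V : Type*} (E : Set (V × V)) (X : Set V) : Set V :=
  gImage E X \ X

/-- The 1-connectivity of the graph:
`κ₁(Γ) = min {|∂(X)| : X finite, |X| ≥ 1, |V \ Γ(X)| ≥ 1}`. -/
noncomputable def gKappa {V : Type*} (E : Set (V × V)) : ℕ∞ :=
  ⨅ X ∈ {X : Set V | X.Finite ∧ 1 ≤ X.encard ∧ 1 ≤ (gImage E X)ᶜ.encard},
    (gBdry E X).encard

lemma gImage_finite {V : Type*} (E : Set (V × V))
    (hlf : ∀ a : V, {y | (a, y) ∈ E}.Finite) {A : Set V} (hA : A.Finite) :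
    (gImage E A).Finite := by
  have : gImage E A ⊆ ⋃ x ∈ A, {y | (x, y) ∈ E} := by
    rintro y ⟨x, hx, hxy⟩
    exact Set.mem_biUnion hx hxy
  exact (Set.Finite.biUnion hA fun x _ => hlf x).subset this

lemma gImage_mono {V : Type*} (E : Set (V × V)) {A B : Set V} (h : A ⊆ B) :
    gImage E A ⊆ gImage E B := by
  rintro y ⟨x, hx, hxy⟩
  exact ⟨x, h hx, hxy⟩

/-- Helper: the connectivity bound on any finite nonempty subset whose closed
neighborhood is not everything. -/
lemma kappa_le {V : Type*} (E : Set (V × V)) {A : Set V}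
    (hA : A.Finite) (hA1 : A.Nonempty) (hA2 : (gImage E A)ᶜ.Nonempty) :
    gKappa E ≤ (gBdry E A).encard := by
  refine iInf₂_le A ?_
  exact ⟨hA, Set.one_le_encard_iff_nonempty.mpr hA1,
    Set.one_le_encard_iff_nonempty.mpr hA2⟩

/-- The strong isoperimetric property for locally finite graphs. -/
theorem stmt_17 {V : Type*} (E : Set (V × V))
    (hlf : ∀ a : V, {y | (a, y) ∈ E}.Finite)
    (k : ℕ) (hk : gKappa E = (k : ℕ∞))
    (X : Set V) (hXfin : X.Finite) (hXk : (k : ℕ∞) ≤ X.encard)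
    (hXV : X.encard + (k : ℕ∞) ≤ (Set.univ : Set V).encard) :
    ∃ C ⊆ X, C.encard = (k : ℕ∞) ∧
      ∃ f : V → V, Set.InjOn f C ∧
        ∀ c ∈ C, f c ∈ gBdry E X ∧ (c, f c) ∈ E := by
  classical
  -- finsets
  set XF : Finset V := hXfin.toFinset with hXF
  have hXFcoe : (XF : Set V) = X := hXfin.coe_toFinset
  have hXenc : X.encard = (XF.card : ℕ∞) := by
    rw [← hXFcoe, Set.encard_coe_eq_coe_finsetCard]
  have hkX : k ≤ XF.card := by
    rw [hXenc] at hXk; exact_mod_cast hXk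
  have hBfin : (gBdry E X).Finite :=
    (gImage_finite E hlf hXfin).subset Set.diff_subset
  set B : Finset V := hBfin.toFinset with hB
  have hBcoe : (B : Set V) = gBdry E X := hBfin.coe_toFinset
  set d : ℕ := XF.card - k with hd
  -- the bipartite "Hall" system with d dummy vertices
  set t : ↥XF → Finset (V ⊕ Fin d) := fun x =>
    (((hlf x.1).toFinset ∩ B).image Sum.inl) ∪ (Finset.univ.image Sum.inr) with ht
  -- Hall's condition
  have hall : ∀ s : Finset ↥XF, s.card ≤ (s.biUnion t).card := by
    intro s
    rcases s.eq_empty_or_nonempty with rfl | hs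
    · simp
    by_contra hcon
    push_neg at hcon
    set Ns : Finset V := s.biUnion (fun x => (hlf x.1).toFinset ∩ B) with hNs
    have hbiUnion : s.biUnion t = Ns.image Sum.inl ∪ Finset.univ.image Sum.inr := by
      obtain ⟨x0, hx0⟩ := hs
      ext y
      simp only [Finset.mem_biUnion, ht, Finset.mem_union, Finset.mem_image,
        Finset.mem_univ, hNs]
      constructor
      · rintro ⟨x, hx, h | h⟩
        · rcases h with ⟨a, ha, rfl⟩
          exact Or.inl ⟨a, ⟨x, hx, ha⟩, rfl⟩
        · exact Or.inr h
      · rintro (⟨a, ⟨x, hx, ha⟩, rfl⟩ | h)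
        · exact ⟨x, hx, Or.inl ⟨a, ha, rfl⟩⟩
        · exact ⟨x0, hx0, Or.inr h⟩
    have hdisj : Disjoint (Ns.image Sum.inl) ((Finset.univ : Finset (Fin d)).image Sum.inr) := by
      simp [Finset.disjoint_left]
    have hcard : (s.biUnion t).card = Ns.card + d := by
      rw [hbiUnion, Finset.card_union_of_disjoint hdisj,
        Finset.card_image_of_injective _ Sum.inl_injective,
        Finset.card_image_of_injective _ Sum.inr_injective]
      simp
    rw [hcard] at hcon
    -- hcon : Ns.card + d < s.card
    -- the witness set
    set AF : Finset V := s.image (fun x => x.1) with hAF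
    have hAcard : AF.card = s.card := Finset.card_image_of_injective _ Subtype.val_injective
    have hAsubX : (AF : Set V) ⊆ X := by
      rintro a ha
      simp only [hAF, Finset.coe_image, Set.mem_image] at ha
      obtain ⟨x, _, rfl⟩ := ha
      rw [← hXFcoe]; exact x.2
    have hAne : (AF : Set V).Nonempty := by
      obtain ⟨x0, hx0⟩ := hs
      refine ⟨x0.1, ?_⟩
      simp only [hAF, Finset.coe_image, Set.mem_image]
      exact ⟨x0, hx0, rfl⟩
    -- boundary of A is inside (X \ A) ∪ Ns
    have hbd : gBdry E (AF : Set V) ⊆ (X \ (AF : Set V)) ∪ (Ns : Set V) := by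
      rintro y ⟨hyim, hyA⟩
      obtain ⟨x, hxA, hxy⟩ := hyim
      by_cases hyX : y ∈ X
      · exact Or.inl ⟨hyX, hyA⟩
      · refine Or.inr ?_
        have hyB : y ∈ gBdry E X := ⟨⟨x, hAsubX hxA, hxy⟩, hyX⟩
        simp only [hNs, Finset.coe_biUnion, Set.mem_iUnion]
        simp only [hAF, Finset.coe_image, Set.mem_image] at hxA
        obtain ⟨xs, hxs, rfl⟩ := hxA
        refine ⟨xs, hxs, ?_⟩
        simp only [Finset.coe_inter, Set.mem_inter_iff, Set.Finite.coe_toFinset]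
        exact ⟨hxy, by rw [hBcoe]; exact hyB⟩
    have hbdenc : (gBdry E (AF : Set V)).encard ≤ ((XF.card - AF.card + Ns.card : ℕ) : ℕ∞) := by
      calc (gBdry E (AF : Set V)).encard
          ≤ ((X \ (AF : Set V)) ∪ (Ns : Set V)).encard := Set.encard_le_encard hbd
        _ ≤ (X \ (AF : Set V)).encard + (Ns : Set V).encard := Set.encard_union_le _ _
        _ ≤ _ := by
            have hAFX : AF ⊆ XF := by
              intro a ha
              rw [← Finset.mem_coe, hXFcoe]
              exact hAsubX ha
            have h1 : (X \ (AF : Set V)).encard = ((XF.card - AF.card : ℕ) : ℕ∞) := by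
              rw [← hXFcoe, ← Finset.coe_sdiff, Set.encard_coe_eq_coe_finsetCard,
                Finset.card_sdiff_of_subset hAFX]
            rw [h1, Set.encard_coe_eq_coe_finsetCard]
            exact_mod_cast le_refl _
    -- it is < k
    have hltk : (gBdry E (AF : Set V)).encard < (k : ℕ∞) := by
      apply lt_of_le_of_lt hbdenc
      have hsle : s.card ≤ XF.card := by
        have := Finset.card_le_univ s
        rwa [Fintype.card_coe] at this
      have : XF.card - AF.card + Ns.card < k := by omega
      exact_mod_cast this
    -- complement of the image is nonempty
    have himne : ((gImage E (AF : Set V))ᶜ).Nonempty := by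
      by_contra hcc
      rw [Set.not_nonempty_iff_eq_empty, ← Set.compl_univ, compl_inj_iff] at hcc
      have h1 : (Set.univ : Set V).encard ≤
          (AF : Set V).encard + (gBdry E (AF : Set V)).encard := by
        rw [← hcc]
        calc (gImage E (AF : Set V)).encard
            ≤ ((AF : Set V) ∪ gBdry E (AF : Set V)).encard := by
              apply Set.encard_le_encard
              intro y hy
              by_cases h : y ∈ (AF : Set V)
              · exact Or.inl h
              · exact Or.inr ⟨hy, h⟩
          _ ≤ _ := Set.encard_union_le _ _
      have h2 : (AF : Set V).encard + (gBdry E (AF : Set V)).encard <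
          X.encard + (k : ℕ∞) := by
        apply lt_of_lt_of_le (b := (AF : Set V).encard + (k : ℕ∞))
        · exact WithTop.add_lt_add_left (AF.finite_toSet.encard_lt_top.ne) hltk
        · exact add_le_add_left (Set.encard_le_encard hAsubX) _
      exact absurd (h1.trans_lt (h2.trans_le hXV)) (lt_irrefl _)
    -- contradiction with κ₁ = k
    have := kappa_le E (AF.finite_toSet) hAne himne
    rw [hk] at this
    exact absurd (this.trans_lt hltk) (lt_irrefl _)
  -- apply Hall
  obtain ⟨F, hFinj, hFmem⟩ :=
    (Finset.all_card_le_biUnion_card_iff_exists_injective t).mp hall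
  -- the set of x with F x of the form inl
  set S : Finset ↥XF := Finset.univ.filter (fun x => (F x).isLeft) with hS
  have hScard : k ≤ S.card := by
    have hcompl : (Finset.univ.filter (fun x : ↥XF => ¬ (F x).isLeft)).card ≤ d := by
      set T := Finset.univ.filter (fun x : ↥XF => ¬ (F x).isLeft) with hT
      have himg : T.image F ⊆ (Finset.univ : Finset (Fin d)).image Sum.inr := by
        intro y hy
        simp only [Finset.mem_image, hT, Finset.mem_filter] at hy
        obtain ⟨x, ⟨_, hx⟩, rfl⟩ := hy
        obtain ⟨a, ha⟩ := Sum.isRight_iff.mp (Sum.not_isLeft.mp hx)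
        rw [ha]
        exact Finset.mem_image_of_mem _ (Finset.mem_univ a)
      calc T.card = (T.image F).card := (Finset.card_image_of_injective _ hFinj).symm
        _ ≤ ((Finset.univ : Finset (Fin d)).image Sum.inr).card := Finset.card_le_card himg
        _ ≤ (Finset.univ : Finset (Fin d)).card := Finset.card_image_le
        _ = d := by simp
    have htot : S.card + (Finset.univ.filter (fun x : ↥XF => ¬ (F x).isLeft)).card
        = XF.card := by
      rw [Finset.card_filter_add_card_filter_not]
      simp [Finset.card_univ]
    omega
  -- choose exactly k of them
  obtain ⟨S', hS'sub, hS'card⟩ := Finset.exists_subset_card_eq hScard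
  set C : Set V := ↑(S'.image (fun x => x.1)) with hC
  have hCX : C ⊆ X := by
    rintro c hc
    simp only [hC, Finset.coe_image, Set.mem_image] at hc
    obtain ⟨x, _, rfl⟩ := hc
    rw [← hXFcoe]; exact x.2
  have hCcard : C.encard = (k : ℕ∞) := by
    rw [hC, Set.encard_coe_eq_coe_finsetCard,
      Finset.card_image_of_injective _ Subtype.val_injective, hS'card]
  -- the function
  set f : V → V := fun v =>
    if h : v ∈ XF then (F ⟨v, h⟩).elim id (fun _ => v) else v with hf
  have hkey : ∀ c (hc : c ∈ C), ∃ (h : c ∈ XF),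
      F ⟨c, h⟩ = Sum.inl (f c) ∧ f c ∈ ((hlf c).toFinset ∩ B) := by
    intro c hc
    simp only [hC, Finset.coe_image, Set.mem_image] at hc
    obtain ⟨x, hx, rfl⟩ := hc
    refine ⟨x.2, ?_⟩
    have hxS : x ∈ S := hS'sub (by exact_mod_cast hx)
    simp only [hS, Finset.mem_filter] at hxS
    obtain ⟨y, hy⟩ := Sum.isLeft_iff.mp hxS.2
    have hxval : (⟨x.1, x.2⟩ : ↥XF) = x := rfl
    have hfx : f x.1 = y := by
      simp only [hf]
      rw [dif_pos x.2, hxval, hy]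
      rfl
    have hmem := hFmem x
    rw [hy] at hmem
    simp only [ht, Finset.mem_union, Finset.mem_image] at hmem
    rcases hmem with ⟨a, ha, hae⟩ | ⟨a, _, hae⟩
    · rw [Sum.inl.injEq] at hae
      subst hae
      rw [hxval, hy, hfx]
      exact ⟨rfl, ha⟩
    · exact absurd hae (by simp)
  refine ⟨C, hCX, hCcard, f, ?_, ?_⟩
  · -- injectivity
    intro a ha b hb hab
    obtain ⟨hax, hFa, _⟩ := hkey a ha
    obtain ⟨hbx, hFb, _⟩ := hkey b hb
    have : F ⟨a, hax⟩ = F ⟨b, hbx⟩ := by rw [hFa, hFb, hab]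
    have := hFinj this
    exact congrArg Subtype.val this
  · intro c hc
    obtain ⟨hcx, _, hmem⟩ := hkey c hc
    rw [Finset.mem_inter, Set.Finite.mem_toFinset] at hmem
    refine ⟨?_, hmem.1⟩
    rw [← hBcoe]; exact_mod_cast hmem.2
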